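/- Let X be a Banach space and (X_k)_{k≥1} closed subspaces with λ_S = sup_{‖x‖=1} inf_{k≥1} dist(x, X_k) < 1. Then (X_k) is an absolutely representing system of subspaces: every x ∈ X can be written x = Σ_{k=1}^∞ z_k with z_k ∈ X_k and Σ ‖z_k‖ ≤ ((1+λ)/(1−λ))‖x‖ for any λ ∈ (λ_S, 1). -/

import Mathlib

open Filter Finset

/-- `λ_S = sup_{‖x‖ = 1} inf_k dist(x, X_k)`. -/
noncomputable def lambdaS {E : Type*} [NormedAddCommGroup E] [NormedSpace ℝ E]
    (X : ℕ → Submodule ℝ E) : ℝ :=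
  sSup {d : ℝ | ∃ x : E, ‖x‖ = 1 ∧ d = ⨅ k : ℕ, Metric.infDist x (X k : Set E)}

lemma tsum_mem_closed {E : Type*} [NormedAddCommGroup E] [NormedSpace ℝ E]
    {p : Submodule ℝ E} (hp : IsClosed (p : Set E)) {ι : Type*} (f : ι → E)
    (hf : ∀ i, f i ∈ p) : (∑' i, f i) ∈ p := by
  by_cases h : Summable f
  · exact hp.mem_of_tendsto h.hasSum
      (Filter.Eventually.of_forall fun s => Submodule.sum_mem _ fun i _ => hf i)
  · rw [tsum_eq_zero_of_not_summable h]; exact p.zero_mem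

/-- If `λ_S < 1`, then `(X_k)` is an absolutely representing system of subspaces:
for every `λ ∈ (λ_S, 1)`, every `x` equals an absolutely convergent series `Σ z_k`,
`z_k ∈ X_k`, with `Σ ‖z_k‖ ≤ ((1+λ)/(1−λ))‖x‖`. -/
theorem arss_of_lambda_lt_one {E : Type*} [NormedAddCommGroup E] [NormedSpace ℝ E]
    [CompleteSpace E] (X : ℕ → Submodule ℝ E) (hX : ∀ k, IsClosed (X k : Set E))
    (hlS : lambdaS X < 1) :
    ∀ l : ℝ, lambdaS X < l → l < 1 → ∀ x : E,
      ∃ z : ℕ → E, (∀ k, z k ∈ X k) ∧ (Summable fun k => ‖z k‖) ∧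
        (∑' k, ‖z k‖) ≤ (1 + l) / (1 - l) * ‖x‖ ∧
        Tendsto (fun n => ∑ k ∈ Finset.range n, z k) atTop (nhds x) := by
  intro l hl hl1 x
  have hlS0 : 0 ≤ lambdaS X := by
    apply Real.sSup_nonneg
    rintro d ⟨u, hu, rfl⟩
    exact Real.iInf_nonneg fun k => Metric.infDist_nonneg
  have hl0 : 0 < l := lt_of_le_of_lt hlS0 hl
  -- key approximation step
  have key : ∀ v : E, ∃ p : ℕ × E, p.2 ∈ X p.1 ∧ ‖v - p.2‖ ≤ l * ‖v‖ := by
    intro v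
    by_cases hv : v = 0
    · exact ⟨(0, 0), (X 0).zero_mem, by simp [hv]⟩
    · have hnv : ‖v‖ ≠ 0 := norm_ne_zero_iff.mpr hv
      set u : E := ‖v‖⁻¹ • v with hu
      have hun : ‖u‖ = 1 := by
        rw [hu, norm_smul, norm_inv, norm_norm, inv_mul_cancel₀ hnv]
      have hmem : (⨅ k : ℕ, Metric.infDist u (X k : Set E)) ∈
          {d : ℝ | ∃ x : E, ‖x‖ = 1 ∧ d = ⨅ k : ℕ, Metric.infDist x (X k : Set E)} :=
        ⟨u, hun, rfl⟩
      have hbdd : BddAbove {d : ℝ | ∃ x : E, ‖x‖ = 1 ∧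
          d = ⨅ k : ℕ, Metric.infDist x (X k : Set E)} := by
        refine ⟨1, ?_⟩
        rintro d ⟨w, hw, rfl⟩
        have hb : BddBelow (Set.range fun k => Metric.infDist w (X k : Set E)) :=
          ⟨0, by rintro _ ⟨k, rfl⟩; exact Metric.infDist_nonneg⟩
        calc (⨅ k : ℕ, Metric.infDist w (X k : Set E))
            ≤ Metric.infDist w (X 0 : Set E) := ciInf_le hb 0
          _ ≤ dist w 0 := Metric.infDist_le_dist_of_mem (X 0).zero_mem
          _ = 1 := by simp [hw]
      have hle : (⨅ k : ℕ, Metric.infDist u (X k : Set E)) < l :=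
        lt_of_le_of_lt (le_csSup hbdd hmem) hl
      obtain ⟨k, hk⟩ := exists_lt_of_ciInf_lt hle
      obtain ⟨y, hyX, hyd⟩ := (Metric.infDist_lt_iff ⟨0, (X k).zero_mem⟩).mp hk
      refine ⟨(k, ‖v‖ • y), Submodule.smul_mem _ _ hyX, ?_⟩
      have hvu : v = ‖v‖ • u := by rw [hu, smul_smul, mul_inv_cancel₀ hnv, one_smul]
      calc ‖v - ‖v‖ • y‖ = ‖‖v‖ • (u - y)‖ := by rw [smul_sub, ← hvu]
        _ = ‖v‖ * ‖u - y‖ := by rw [norm_smul, norm_norm]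
        _ ≤ ‖v‖ * l := by
            apply mul_le_mul_of_nonneg_left _ (norm_nonneg v)
            rw [dist_eq_norm] at hyd; exact hyd.le
        _ = l * ‖v‖ := mul_comm _ _
  choose F hF1 hF2 using key
  set seq : ℕ → E := fun n => (fun v => v - (F v).2)^[n] x with hseq
  have hseqsucc : ∀ n, seq (n + 1) = seq n - (F (seq n)).2 := fun n => by
    rw [hseq]; simp [Function.iterate_succ_apply']
  set y : ℕ → E := fun n => (F (seq n)).2 with hy
  set κ : ℕ → ℕ := fun n => (F (seq n)).1 with hκ
  have hseqnorm : ∀ n, ‖seq n‖ ≤ l ^ n * ‖x‖ := by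
    intro n
    induction n with
    | zero => simp [hseq]
    | succ n ih =>
      rw [hseqsucc n, pow_succ, mul_comm (l ^ n) l, mul_assoc]
      exact le_trans (hF2 (seq n)) (mul_le_mul_of_nonneg_left ih hl0.le)
  have hynorm : ∀ n, ‖y n‖ ≤ (1 + l) * (l ^ n * ‖x‖) := by
    intro n
    have : ‖y n‖ ≤ ‖seq n‖ + l * ‖seq n‖ := by
      calc ‖y n‖ = ‖seq n - (seq n - y n)‖ := by rw [sub_sub_cancel]
        _ ≤ ‖seq n‖ + ‖seq n - y n‖ := norm_sub_le _ _
        _ ≤ ‖seq n‖ + l * ‖seq n‖ := by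
            have := hF2 (seq n); exact add_le_add_right this _
    calc ‖y n‖ ≤ ‖seq n‖ + l * ‖seq n‖ := this
      _ = (1 + l) * ‖seq n‖ := by ring
      _ ≤ (1 + l) * (l ^ n * ‖x‖) := by
          apply mul_le_mul_of_nonneg_left (hseqnorm n)
          linarith
  have hgeo : Summable fun n : ℕ => (1 + l) * (l ^ n * ‖x‖) := by
    have : Summable fun n : ℕ => l ^ n :=
      summable_geometric_of_lt_one hl0.le hl1
    simpa [mul_assoc, mul_comm, mul_left_comm] using ((this.mul_right ‖x‖).mul_left (1 + l))
  have hysum : Summable fun n => ‖y n‖ :=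
    Summable.of_nonneg_of_le (fun n => norm_nonneg _) hynorm hgeo
  have hySummable : Summable y := hysum.of_norm
  -- partial sums of y
  have hpartial : ∀ n, ∑ i ∈ Finset.range n, y i = x - seq n := by
    intro n
    induction n with
    | zero => simp [hseq]
    | succ n ih =>
      rw [Finset.sum_range_succ, ih, hseqsucc n]
      abel
  have hseq0 : Tendsto seq atTop (nhds 0) := by
    rw [tendsto_zero_iff_norm_tendsto_zero]
    apply squeeze_zero (fun n => norm_nonneg _) hseqnorm
    have : Tendsto (fun n : ℕ => l ^ n) atTop (nhds 0) :=
      tendsto_pow_atTop_nhds_zero_of_lt_one hl0.le hl1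
    simpa using this.mul_const ‖x‖
  have hytends : Tendsto (fun n => ∑ i ∈ Finset.range n, y i) atTop (nhds x) := by
    simp only [hpartial]
    simpa using (tendsto_const_nhds (x := x)).sub hseq0
  have hyx : HasSum y x := by
    have heq : (∑' n, y n) = x :=
      tendsto_nhds_unique hySummable.hasSum.tendsto_sum_nat hytends
    exact heq ▸ hySummable.hasSum
  -- regroup by fibers of κ
  set z : ℕ → E := fun j => ∑' n : (κ ⁻¹' {j} : Set ℕ), y n with hz
  have hzx : HasSum z x := hyx.tsum_fiberwise κ
  set w : ℕ → ℝ := fun j => ∑' n : (κ ⁻¹' {j} : Set ℕ), ‖y n‖ with hw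
  have hwsum : HasSum w (∑' n, ‖y n‖) := hysum.hasSum.tsum_fiberwise κ
  have hzw : ∀ j, ‖z j‖ ≤ w j := fun j =>
    norm_tsum_le_tsum_norm (hysum.subtype _)
  have hznorm : Summable fun j => ‖z j‖ :=
    Summable.of_nonneg_of_le (fun j => norm_nonneg _) hzw hwsum.summable
  have hybound : (∑' n, ‖y n‖) ≤ (1 + l) / (1 - l) * ‖x‖ := by
    have h1 : (∑' n, ‖y n‖) ≤ ∑' n, (1 + l) * (l ^ n * ‖x‖) :=
      Summable.tsum_le_tsum hynorm hysum hgeo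
    have h2 : (∑' n : ℕ, (1 + l) * (l ^ n * ‖x‖)) = (1 + l) / (1 - l) * ‖x‖ := by
      have hg : (∑' n : ℕ, l ^ n) = (1 - l)⁻¹ := tsum_geometric_of_lt_one hl0.le hl1
      rw [tsum_mul_left, tsum_mul_right, hg]
      field_simp
    linarith [h1, h2.symm.le.trans (le_refl _)]
  refine ⟨z, ?_, hznorm, ?_, hzx.tendsto_sum_nat⟩
  · intro j
    apply tsum_mem_closed (hX j)
    rintro ⟨n, hn⟩
    have : κ n = j := hn
    simpa [hy, hκ, this] using (this ▸ hF1 (seq n))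
  · calc (∑' j, ‖z j‖) ≤ ∑' j, w j := Summable.tsum_le_tsum hzw hznorm hwsum.summable
      _ = ∑' n, ‖y n‖ := hwsum.tsum_eq
      _ ≤ (1 + l) / (1 - l) * ‖x‖ := hybound
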